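/- Policy performance upper bound (Lemma 3.1, upper inequality): in a finite discounted MDP, for any two policies π and π' with (π s a = 0 → π' s a = 0) and any signal F : S → A → ℝ, J_F(π') − J_F(π) ≤ (1/(1−γ)) · 𝔸_F(π,π') + (√2 · γ · ε_F(π,π') / (1−γ)²) · √(D̄_KL(π'‖π)). -/

import Mathlib

open Real BigOperators
open Real BigOperators

/-- Induced transition matrix of policy `pol`: `P_pol(s,s') = ∑ a, pol s a * P s a s'`. -/
noncomputable def transMat {S A : Type*} [Fintype A] (P : S → A → S → ℝ)
    (pol : S → A → ℝ) : Matrix S S ℝ :=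
  fun s s' => ∑ a, pol s a * P s a s'

/-- Discounted state visitation distribution
`d_pol(s) = (1-γ) ∑ₜ γ^t ∑_{s0} ρ0 s0 * (P_pol^t)(s0,s)`. -/
noncomputable def dVisit {S A : Type*} [Fintype S] [DecidableEq S] [Fintype A]
    (P : S → A → S → ℝ) (γ : ℝ) (ρ0 : S → ℝ) (pol : S → A → ℝ) (s : S) : ℝ :=
  (1 - γ) * ∑' t : ℕ, γ ^ t * ∑ s0, ρ0 s0 * (transMat P pol ^ t) s0 s

/-- Value function of signal `F` under policy `pol`. -/
noncomputable def Vfun {S A : Type*} [Fintype S] [DecidableEq S] [Fintype A]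
    (P : S → A → S → ℝ) (γ : ℝ) (F : S → A → ℝ) (pol : S → A → ℝ) (s : S) : ℝ :=
  ∑' t : ℕ, γ ^ t * ∑ s', (transMat P pol ^ t) s s' * ∑ a, pol s' a * F s' a

/-- Return `J_F(pol) = ∑ s, ρ0 s * V_F^pol(s)`. -/
noncomputable def Jret {S A : Type*} [Fintype S] [DecidableEq S] [Fintype A]
    (P : S → A → S → ℝ) (γ : ℝ) (ρ0 : S → ℝ) (F : S → A → ℝ) (pol : S → A → ℝ) : ℝ :=
  ∑ s, ρ0 s * Vfun P γ F pol s

/-- Action-value function `Q_F^pol(s,a) = F s a + γ ∑_{s'} P s a s' * V_F^pol(s')`. -/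
noncomputable def Qfun {S A : Type*} [Fintype S] [DecidableEq S] [Fintype A]
    (P : S → A → S → ℝ) (γ : ℝ) (F : S → A → ℝ) (pol : S → A → ℝ) (s : S) (a : A) : ℝ :=
  F s a + γ * ∑ s', P s a s' * Vfun P γ F pol s'

/-- Advantage function `A_F^pol(s,a) = Q_F^pol(s,a) - V_F^pol(s)`. -/
noncomputable def Adv {S A : Type*} [Fintype S] [DecidableEq S] [Fintype A]
    (P : S → A → S → ℝ) (γ : ℝ) (F : S → A → ℝ) (pol : S → A → ℝ) (s : S) (a : A) : ℝ :=
  Qfun P γ F pol s a - Vfun P γ F pol s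

/-- Expected surrogate advantage
`𝔸_F(pol,pol') = ∑ s, d_pol(s) ∑ a, pol' s a * A_F^pol(s,a)`. -/
noncomputable def surrAdv {S A : Type*} [Fintype S] [DecidableEq S] [Fintype A]
    (P : S → A → S → ℝ) (γ : ℝ) (ρ0 : S → ℝ) (F : S → A → ℝ)
    (pol pol' : S → A → ℝ) : ℝ :=
  ∑ s, dVisit P γ ρ0 pol s * ∑ a, pol' s a * Adv P γ F pol s a

/-- `ε_F(pol,pol') = max_s |∑ a, pol' s a * A_F^pol(s,a)|`. -/
noncomputable def epsAdv {S A : Type*} [Fintype S] [DecidableEq S] [Fintype A] [Nonempty S]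
    (P : S → A → S → ℝ) (γ : ℝ) (F : S → A → ℝ) (pol pol' : S → A → ℝ) : ℝ :=
  Finset.univ.sup' Finset.univ_nonempty fun s => |∑ a, pol' s a * Adv P γ F pol s a|

/-- Per-state KL divergence `KL(pol'‖pol)(s) = ∑ a, pol' s a * log (pol' s a / pol s a)`
(with the convention `0 * log 0 = 0`, automatic since `Real.log 0 = 0`). -/
noncomputable def klState {S A : Type*} [Fintype A] (pol' pol : S → A → ℝ) (s : S) : ℝ :=
  ∑ a, pol' s a * Real.log (pol' s a / pol s a)

/-- Averaged KL divergence `D̄_KL(pol'‖pol) = ∑ s, d_pol(s) * KL(pol'‖pol)(s)`. -/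
noncomputable def avgKL {S A : Type*} [Fintype S] [DecidableEq S] [Fintype A]
    (P : S → A → S → ℝ) (γ : ℝ) (ρ0 : S → ℝ) (pol' pol : S → A → ℝ) : ℝ :=
  ∑ s, dVisit P γ ρ0 pol s * klState pol' pol s



/-- `h(x) = (x+1) log x - 2(x-1)` is monotone on `(0,∞)`. -/
lemma aux_h_mono : MonotoneOn (fun x : ℝ => (x+1) * Real.log x - 2*(x-1)) (Set.Ioi 0) := by
  have hderiv : ∀ x : ℝ, 0 < x →
      HasDerivAt (fun x : ℝ => (x+1) * Real.log x - 2*(x-1)) (Real.log x + x⁻¹ - 1) x := by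
    intro x hx
    have h1 : HasDerivAt (fun x : ℝ => (x+1) * Real.log x)
        (1 * Real.log x + (x+1) * x⁻¹) x :=
      (((hasDerivAt_id x).add_const 1).mul (Real.hasDerivAt_log hx.ne'))
    have h2 : HasDerivAt (fun x : ℝ => 2*(x-1)) 2 x := by
      simpa using ((hasDerivAt_id x).sub_const 1).const_mul 2
    have := h1.sub h2
    refine this.congr_deriv ?_
    rw [add_mul, mul_inv_cancel₀ hx.ne']
    ring
  apply monotoneOn_of_deriv_nonneg (convex_Ioi 0)
  · intro x hx
    exact ((hderiv x hx).differentiableAt.continuousAt).continuousWithinAt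
  · intro x hx
    rw [interior_Ioi] at hx
    exact ((hderiv x hx).differentiableAt).differentiableWithinAt
  · intro x hx
    rw [interior_Ioi] at hx
    rw [(hderiv x hx).deriv]
    have := Real.one_sub_inv_le_log_of_pos hx
    linarith

lemma aux_h_sign_le {x : ℝ} (hx0 : 0 < x) (hx1 : x ≤ 1) :
    (x+1) * Real.log x - 2*(x-1) ≤ 0 := by
  have := aux_h_mono hx0 (Set.mem_Ioi.2 one_pos) hx1
  simpa using this

lemma aux_h_sign_ge {x : ℝ} (hx1 : 1 ≤ x) :
    0 ≤ (x+1) * Real.log x - 2*(x-1) := by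
  have := aux_h_mono (Set.mem_Ioi.2 one_pos) (Set.mem_Ioi.2 (lt_of_lt_of_le one_pos hx1)) hx1
  simpa using this

/-- Key pointwise inequality: `3(x-1)² ≤ 2(x+2)(x log x - x + 1)` for `x ≥ 0`. -/
lemma key_ineq (x : ℝ) (hx : 0 ≤ x) :
    3*(x-1)^2 ≤ 2*(x+2)*(x * Real.log x - x + 1) := by
  have hψderiv : ∀ y : ℝ, 0 < y →
      HasDerivAt (fun y : ℝ => 2*(y+2)*(y * Real.log y - y + 1) - 3*(y-1)^2)
        (4 * ((y+1) * Real.log y - 2*(y-1))) y := by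
    intro y hy
    have h1 : HasDerivAt (fun y : ℝ => y * Real.log y - y + 1) ((Real.log y + 1) - 1) y :=
      ((Real.hasDerivAt_mul_log hy.ne').sub (hasDerivAt_id y)).add_const 1
    have h2 : HasDerivAt (fun y : ℝ => 2*(y+2)) 2 y := by
      simpa using ((hasDerivAt_id y).add_const 2).const_mul 2
    have h3 : HasDerivAt (fun y : ℝ => 2*(y+2)*(y * Real.log y - y + 1))
        (2 * (y * Real.log y - y + 1) + (2*(y+2)) * ((Real.log y + 1) - 1)) y := h2.mul h1
    have h4 : HasDerivAt (fun y : ℝ => 3*(y-1)^2) (3*(2*(y-1))) y := by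
      have : HasDerivAt (fun y : ℝ => (y-1)^2) (2*(y-1)) y := by
        simpa [Pi.pow_def] using ((hasDerivAt_id y).sub_const 1).pow 2
      simpa [mul_assoc] using this.const_mul 3
    have := h3.sub h4
    refine this.congr_deriv ?_
    ring
  set ψ : ℝ → ℝ := fun y => 2*(y+2)*(y * Real.log y - y + 1) - 3*(y-1)^2 with hψ
  have hψcont : Continuous ψ := by
    apply Continuous.sub
    · exact (continuous_const.mul (continuous_id.add continuous_const)).mul
        ((Real.continuous_mul_log.sub continuous_id).add continuous_const)
    · continuity
  have hψ1 : ψ 1 = 0 := by simp [hψ]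
  have goal : 0 ≤ ψ x := by
    rcases le_or_gt x 1 with hle | hgt
    · -- antitone on Icc 0 1? careful at 0; use Ioc 0 1 and handle x = 0 separately
      rcases eq_or_lt_of_le hx with h0 | h0
      · simp [hψ, ← h0]; norm_num
      · have hanti : AntitoneOn ψ (Set.Ioc 0 1) := by
          apply antitoneOn_of_deriv_nonpos (convex_Ioc 0 1) hψcont.continuousOn
          · intro y hy
            rw [interior_Ioc] at hy
            exact ((hψderiv y hy.1).differentiableAt).differentiableWithinAt
          · intro y hy
            rw [interior_Ioc] at hy
            rw [(hψderiv y hy.1).deriv]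
            have := aux_h_sign_le hy.1 hy.2.le
            linarith
        have := hanti (Set.mem_Ioc.2 ⟨h0, hle⟩) (Set.mem_Ioc.2 ⟨one_pos, le_refl 1⟩) hle
        rw [hψ1] at this
        exact this
    · have hmono : MonotoneOn ψ (Set.Ici 1) := by
        apply monotoneOn_of_deriv_nonneg (convex_Ici 1) hψcont.continuousOn
        · intro y hy
          rw [interior_Ici] at hy
          exact ((hψderiv y (lt_trans one_pos hy)).differentiableAt).differentiableWithinAt
        · intro y hy
          rw [interior_Ici] at hy
          rw [(hψderiv y (lt_trans one_pos hy)).deriv]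
          have := aux_h_sign_ge hy.le
          linarith
      have := hmono (Set.mem_Ici.2 (le_refl 1)) (Set.mem_Ici.2 hgt.le) hgt.le
      rw [hψ1] at this
      exact this
  simp only [hψ] at goal
  linarith


/-- Per-term inequality for Pinsker. -/
lemma pinsker_term (p q : ℝ) (hp : 0 ≤ p) (hq : 0 ≤ q) (habs : q = 0 → p = 0) :
    (p - q)^2 / (p + 2*q) ≤ (2/3) * (p * Real.log (p/q) - p + q) := by
  rcases eq_or_lt_of_le hq with h0 | h0
  · have hp0 := habs h0.symm
    simp [hp0, ← h0]
  · set x := p / q with hxdef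
    have hx : 0 ≤ x := div_nonneg hp h0.le
    have hpq : p = q * x := by rw [hxdef, mul_div_assoc', eq_div_iff h0.ne']; ring
    have key := key_ineq x hx
    rw [div_le_iff₀ (by nlinarith : (0:ℝ) < p + 2*q)]
    rw [hpq]
    nlinarith [mul_le_mul_of_nonneg_left key (sq_nonneg q), sq_nonneg q, mul_pos h0 h0]

/-- Discrete Pinsker inequality (with nonnegativity of KL). -/
lemma pinsker {A : Type*} [Fintype A] (p q : A → ℝ) (hp0 : ∀ a, 0 ≤ p a)
    (hq0 : ∀ a, 0 ≤ q a) (hp1 : ∑ a, p a = 1) (hq1 : ∑ a, q a = 1)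
    (habs : ∀ a, q a = 0 → p a = 0) :
    0 ≤ ∑ a, p a * Real.log (p a / q a) ∧
    ∑ a, |p a - q a| ≤ Real.sqrt (2 * ∑ a, p a * Real.log (p a / q a)) := by
  set KL := ∑ a, p a * Real.log (p a / q a) with hKL
  have hg0 : ∀ a, (0:ℝ) ≤ (p a - q a)^2 / (p a + 2 * q a) := fun a =>
    div_nonneg (sq_nonneg _) (by nlinarith [hp0 a, hq0 a])
  have hgKL : ∑ a, (p a - q a)^2 / (p a + 2 * q a) ≤ (2/3) * KL := by
    rw [hKL]
    calc ∑ a, (p a - q a)^2 / (p a + 2 * q a)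
        ≤ ∑ a, (2/3) * (p a * Real.log (p a / q a) - p a + q a) :=
          Finset.sum_le_sum fun a _ => pinsker_term _ _ (hp0 a) (hq0 a) (habs a)
      _ = (2/3) * ∑ a, p a * Real.log (p a / q a) := by
          rw [← Finset.mul_sum]
          congr 1
          have : ∑ a, (p a * Real.log (p a / q a) - p a + q a)
              = (∑ a, p a * Real.log (p a / q a)) - (∑ a, p a) + ∑ a, q a := by
            rw [Finset.sum_add_distrib, Finset.sum_sub_distrib]
          rw [this, hp1, hq1]; ring
  have hKL0 : 0 ≤ KL := by
    have : (0:ℝ) ≤ ∑ a, (p a - q a)^2 / (p a + 2 * q a) := Finset.sum_nonneg fun a _ => hg0 a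
    linarith
  have hCS : (∑ a, |p a - q a|) ^ 2 ≤
      (∑ a, (p a + 2 * q a)) * ∑ a, (p a - q a)^2 / (p a + 2 * q a) := by
    apply Finset.sum_sq_le_sum_mul_sum_of_sq_eq_mul
    · intro a _; nlinarith [hp0 a, hq0 a]
    · intro a _; exact hg0 a
    · intro a _
      rcases eq_or_lt_of_le (hq0 a) with h0 | h0
      · have := habs a h0.symm
        simp [this, ← h0]
      · rw [sq_abs]
        rw [mul_div_assoc', eq_div_iff (by nlinarith [hp0 a] : p a + 2 * q a ≠ 0)]
        ring
  have hsum3 : ∑ a, (p a + 2 * q a) = 3 := by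
    rw [Finset.sum_add_distrib, hp1, ← Finset.mul_sum, hq1]; norm_num
  have hfinal : (∑ a, |p a - q a|) ^ 2 ≤ 2 * KL := by
    calc (∑ a, |p a - q a|) ^ 2 ≤ 3 * ((2/3) * KL) := by
          rw [hsum3] at hCS
          nlinarith [hgKL, hCS]
      _ = 2 * KL := by ring
  refine ⟨hKL0, ?_⟩
  have habs0 : 0 ≤ ∑ a, |p a - q a| := Finset.sum_nonneg fun a _ => abs_nonneg _
  calc ∑ a, |p a - q a| = Real.sqrt ((∑ a, |p a - q a|)^2) := (Real.sqrt_sq habs0).symm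
    _ ≤ Real.sqrt (2 * KL) := Real.sqrt_le_sqrt hfinal

section Stoch
set_option linter.unusedSectionVars false
variable {S : Type*} [Fintype S] [DecidableEq S]

lemma pow_entry_nonneg {M : Matrix S S ℝ} (h0 : ∀ i j, 0 ≤ M i j) :
    ∀ (t : ℕ) (i j : S), 0 ≤ (M ^ t) i j := by
  intro t
  induction t with
  | zero =>
      intro i j
      rw [pow_zero, Matrix.one_apply]
      split_ifs <;> norm_num
  | succ t ih =>
      intro i j
      rw [pow_succ, Matrix.mul_apply]
      exact Finset.sum_nonneg fun k _ => mul_nonneg (ih i k) (h0 k j)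

lemma pow_row_sum {M : Matrix S S ℝ} (h1 : ∀ i, ∑ j, M i j = 1) :
    ∀ (t : ℕ) (i : S), ∑ j, (M ^ t) i j = 1 := by
  intro t
  induction t with
  | zero => intro i; simp [Matrix.one_apply]
  | succ t ih =>
      intro i
      simp only [pow_succ, Matrix.mul_apply]
      rw [Finset.sum_comm]
      simp_rw [← Finset.mul_sum, h1, mul_one]
      exact ih i

lemma abs_weighted_sum_le {W r : S → ℝ} (hW0 : ∀ s, 0 ≤ W s) (hW1 : ∑ s, W s = 1) :
    |∑ s, W s * r s| ≤ ∑ s, |r s| := by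
  calc |∑ s, W s * r s| ≤ ∑ s, |W s * r s| := Finset.abs_sum_le_sum_abs _ _
    _ = ∑ s, W s * |r s| := by
        apply Finset.sum_congr rfl; intro s _
        rw [abs_mul, abs_of_nonneg (hW0 s)]
    _ ≤ ∑ s, 1 * |r s| := by
        apply Finset.sum_le_sum; intro s _
        apply mul_le_mul_of_nonneg_right _ (abs_nonneg _)
        calc W s ≤ ∑ s', W s' := Finset.single_le_sum (fun i _ => hW0 i) (Finset.mem_univ s)
          _ = 1 := hW1
    _ = ∑ s, |r s| := by simp

lemma summable_geom_bound {γ : ℝ} (hγ0 : 0 ≤ γ) (hγ1 : γ < 1) {u : ℕ → ℝ} {C : ℝ}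
    (h : ∀ t, |u t| ≤ C * γ ^ t) : Summable u :=
  Summable.of_abs (Summable.of_nonneg_of_le (fun t => abs_nonneg _) h
    ((summable_geometric_of_lt_one hγ0 hγ1).mul_left C))

/-- Summability of value-type series. -/
lemma summable_row {γ : ℝ} (hγ0 : 0 < γ) (hγ1 : γ < 1)
    {M : Matrix S S ℝ} (h0 : ∀ i j, 0 ≤ M i j) (h1 : ∀ i, ∑ j, M i j = 1)
    (r : S → ℝ) (s : S) :
    Summable fun t : ℕ => γ ^ t * ∑ s', (M ^ t) s s' * r s' := by
  apply summable_geom_bound hγ0.le hγ1 (C := ∑ s', |r s'|)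
  intro t
  rw [mul_comm ((∑ s', |r s'|)) (γ^t), abs_mul, abs_pow, abs_of_nonneg hγ0.le]
  apply mul_le_mul_of_nonneg_left _ (pow_nonneg hγ0.le t)
  exact abs_weighted_sum_le (fun s' => pow_entry_nonneg h0 t s s') (pow_row_sum h1 t s)

lemma D_nonneg {ρ : S → ℝ} (hρ0 : ∀ s, 0 ≤ ρ s) {M : Matrix S S ℝ}
    (h0 : ∀ i j, 0 ≤ M i j) (t : ℕ) (s : S) : 0 ≤ ∑ s0, ρ s0 * (M ^ t) s0 s :=
  Finset.sum_nonneg fun s0 _ => mul_nonneg (hρ0 s0) (pow_entry_nonneg h0 t s0 s)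

lemma D_sum {ρ : S → ℝ} (hρ1 : ∑ s, ρ s = 1) {M : Matrix S S ℝ}
    (h1 : ∀ i, ∑ j, M i j = 1) (t : ℕ) : ∑ s, ∑ s0, ρ s0 * (M ^ t) s0 s = 1 := by
  rw [Finset.sum_comm]
  simp_rw [← Finset.mul_sum, pow_row_sum h1, mul_one]
  exact hρ1

lemma D_le_one {ρ : S → ℝ} (hρ0 : ∀ s, 0 ≤ ρ s) (hρ1 : ∑ s, ρ s = 1) {M : Matrix S S ℝ}
    (h0 : ∀ i j, 0 ≤ M i j) (h1 : ∀ i, ∑ j, M i j = 1) (t : ℕ) (s : S) :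
    ∑ s0, ρ s0 * (M ^ t) s0 s ≤ 1 := by
  calc ∑ s0, ρ s0 * (M ^ t) s0 s ≤ ∑ s', ∑ s0, ρ s0 * (M ^ t) s0 s' :=
        Finset.single_le_sum (fun s' _ => D_nonneg hρ0 h0 t s') (Finset.mem_univ s)
    _ = 1 := D_sum hρ1 h1 t

/-- Summability of `t ↦ γ^t * ∑ s, D t s * f s`. -/
lemma summable_Df {γ : ℝ} (hγ0 : 0 < γ) (hγ1 : γ < 1)
    {ρ : S → ℝ} (hρ0 : ∀ s, 0 ≤ ρ s) (hρ1 : ∑ s, ρ s = 1) {M : Matrix S S ℝ}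
    (h0 : ∀ i j, 0 ≤ M i j) (h1 : ∀ i, ∑ j, M i j = 1) (f : S → ℝ) :
    Summable fun t : ℕ => γ ^ t * ∑ s, (∑ s0, ρ s0 * (M ^ t) s0 s) * f s := by
  apply summable_geom_bound hγ0.le hγ1 (C := ∑ s, |f s|)
  intro t
  rw [mul_comm ((∑ s, |f s|)) (γ^t), abs_mul, abs_pow, abs_of_nonneg hγ0.le]
  apply mul_le_mul_of_nonneg_left _ (pow_nonneg hγ0.le t)
  exact abs_weighted_sum_le (fun s => D_nonneg hρ0 h0 t s) (D_sum hρ1 h1 t)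

lemma summable_D {γ : ℝ} (hγ0 : 0 < γ) (hγ1 : γ < 1)
    {ρ : S → ℝ} (hρ0 : ∀ s, 0 ≤ ρ s) (hρ1 : ∑ s, ρ s = 1) {M : Matrix S S ℝ}
    (h0 : ∀ i j, 0 ≤ M i j) (h1 : ∀ i, ∑ j, M i j = 1) (s : S) :
    Summable fun t : ℕ => γ ^ t * ∑ s0, ρ s0 * (M ^ t) s0 s := by
  apply summable_geom_bound hγ0.le hγ1 (C := 1)
  intro t
  rw [one_mul, abs_mul, abs_pow, abs_of_nonneg hγ0.le,
    abs_of_nonneg (D_nonneg hρ0 h0 t s)]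
  calc γ ^ t * ∑ s0, ρ s0 * (M ^ t) s0 s ≤ γ ^ t * 1 :=
        mul_le_mul_of_nonneg_left (D_le_one hρ0 hρ1 h0 h1 t s) (pow_nonneg hγ0.le t)
    _ = γ ^ t := mul_one _

lemma summable_Ds {γ : ℝ} (hγ0 : 0 < γ) (hγ1 : γ < 1)
    {ρ : S → ℝ} (hρ0 : ∀ s, 0 ≤ ρ s) (hρ1 : ∑ s, ρ s = 1) {M : Matrix S S ℝ}
    (h0 : ∀ i j, 0 ≤ M i j) (h1 : ∀ i, ∑ j, M i j = 1) (s : S) (c : ℝ) :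
    Summable fun t : ℕ => γ ^ t * (∑ s0, ρ s0 * (M ^ t) s0 s) * c := by
  simpa [mul_assoc] using ((summable_D hγ0 hγ1 hρ0 hρ1 h0 h1 s).mul_right c)

/-- Swap lemma: weighted sum against `d` equals discounted sum of weighted rows. -/
lemma d_weight_eq {γ : ℝ} (hγ0 : 0 < γ) (hγ1 : γ < 1)
    {ρ : S → ℝ} (hρ0 : ∀ s, 0 ≤ ρ s) (hρ1 : ∑ s, ρ s = 1) {M : Matrix S S ℝ}
    (h0 : ∀ i j, 0 ≤ M i j) (h1 : ∀ i, ∑ j, M i j = 1) (f : S → ℝ) :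
    ∑ s, ((1-γ) * ∑' t : ℕ, γ ^ t * ∑ s0, ρ s0 * (M ^ t) s0 s) * f s
      = (1-γ) * ∑' t : ℕ, γ ^ t * ∑ s, (∑ s0, ρ s0 * (M ^ t) s0 s) * f s := by
  calc ∑ s, ((1-γ) * ∑' t : ℕ, γ ^ t * ∑ s0, ρ s0 * (M ^ t) s0 s) * f s
      = (1-γ) * ∑ s, (∑' t : ℕ, γ ^ t * (∑ s0, ρ s0 * (M ^ t) s0 s) * f s) := by
        rw [Finset.mul_sum]
        apply Finset.sum_congr rfl; intro s _
        rw [mul_assoc, ← tsum_mul_right]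
    _ = (1-γ) * ∑' t : ℕ, ∑ s, γ ^ t * (∑ s0, ρ s0 * (M ^ t) s0 s) * f s := by
        congr 1
        exact (Summable.tsum_finsetSum (fun s _ => summable_Ds hγ0 hγ1 hρ0 hρ1 h0 h1 s (f s))).symm
    _ = (1-γ) * ∑' t : ℕ, γ ^ t * ∑ s, (∑ s0, ρ s0 * (M ^ t) s0 s) * f s := by
        congr 1
        apply tsum_congr; intro t
        rw [Finset.mul_sum]
        apply Finset.sum_congr rfl; intro s _; ring

lemma tsum_shift {v : ℕ → ℝ} (hv : Summable v) : ∑' t, v (t+1) = (∑' t, v t) - v 0 := by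
  have := Summable.tsum_eq_zero_add hv
  linarith

lemma D_zero {ρ : S → ℝ} (s : S) {M : Matrix S S ℝ} :
    ∑ s0, ρ s0 * (M ^ 0) s0 s = ρ s := by
  simp [Matrix.one_apply]

lemma D_succ {ρ : S → ℝ} {M : Matrix S S ℝ} (t : ℕ) (s : S) :
    ∑ s0, ρ s0 * (M ^ (t+1)) s0 s = ∑ k, (∑ s0, ρ s0 * (M ^ t) s0 k) * M k s := by
  simp_rw [pow_succ, Matrix.mul_apply, Finset.mul_sum, Finset.sum_mul]
  rw [Finset.sum_comm]
  apply Finset.sum_congr rfl; intro k _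
  apply Finset.sum_congr rfl; intro s0 _; ring

/-- `∑_s D_{t+1}(s) V(s) = ∑_k D_t(k) (M V)(k)`. -/
lemma D_MV {ρ : S → ℝ} {M : Matrix S S ℝ} (t : ℕ) (V : S → ℝ) :
    ∑ s, (∑ s0, ρ s0 * (M ^ (t+1)) s0 s) * V s
      = ∑ k, (∑ s0, ρ s0 * (M ^ t) s0 k) * ∑ s, M k s * V s := by
  calc ∑ s, (∑ s0, ρ s0 * (M ^ (t+1)) s0 s) * V s
      = ∑ s, ∑ k, (∑ s0, ρ s0 * (M ^ t) s0 k) * M k s * V s := by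
        apply Finset.sum_congr rfl; intro s _
        rw [D_succ, Finset.sum_mul]
    _ = ∑ k, ∑ s, (∑ s0, ρ s0 * (M ^ t) s0 k) * M k s * V s := Finset.sum_comm
    _ = ∑ k, (∑ s0, ρ s0 * (M ^ t) s0 k) * ∑ s, M k s * V s := by
        apply Finset.sum_congr rfl; intro k _
        rw [Finset.mul_sum]
        apply Finset.sum_congr rfl; intro s _; ring

/-- Swap lemma for the return: `J = ∑' t, γ^t ⟨ρ Mᵗ, r⟩`. -/
lemma J_eq {γ : ℝ} (hγ0 : 0 < γ) (hγ1 : γ < 1)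
    (ρ : S → ℝ) {M : Matrix S S ℝ}
    (h0 : ∀ i j, 0 ≤ M i j) (h1 : ∀ i, ∑ j, M i j = 1) (r : S → ℝ) :
    ∑ s, ρ s * (∑' t : ℕ, γ ^ t * ∑ s', (M ^ t) s s' * r s')
      = ∑' t : ℕ, γ ^ t * ∑ s', (∑ s0, ρ s0 * (M ^ t) s0 s') * r s' := by
  calc ∑ s, ρ s * (∑' t : ℕ, γ ^ t * ∑ s', (M ^ t) s s' * r s')
      = ∑ s, ∑' t : ℕ, ρ s * (γ ^ t * ∑ s', (M ^ t) s s' * r s') := by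
        apply Finset.sum_congr rfl; intro s _
        rw [tsum_mul_left]
    _ = ∑' t : ℕ, ∑ s, ρ s * (γ ^ t * ∑ s', (M ^ t) s s' * r s') := by
        exact (Summable.tsum_finsetSum (fun s _ => (summable_row hγ0 hγ1 h0 h1 r s).mul_left (ρ s))).symm
    _ = ∑' t : ℕ, γ ^ t * ∑ s', (∑ s0, ρ s0 * (M ^ t) s0 s') * r s' := by
        apply tsum_congr; intro t
        calc ∑ s, ρ s * (γ ^ t * ∑ s', (M ^ t) s s' * r s')
            = ∑ s, ∑ s', γ ^ t * (ρ s * ((M ^ t) s s' * r s')) := by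
              apply Finset.sum_congr rfl; intro s _
              simp only [Finset.mul_sum]
              apply Finset.sum_congr rfl; intro s' _; ring
          _ = ∑ s', ∑ s, γ ^ t * (ρ s * ((M ^ t) s s' * r s')) := Finset.sum_comm
          _ = γ ^ t * ∑ s', (∑ s0, ρ s0 * (M ^ t) s0 s') * r s' := by
              simp only [Finset.mul_sum, Finset.sum_mul]
              apply Finset.sum_congr rfl; intro s' _
              apply Finset.sum_congr rfl; intro s _; ring

/-- Bellman-type recursion for the value series. -/
lemma V_rec {γ : ℝ} (hγ0 : 0 < γ) (hγ1 : γ < 1)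
    {M : Matrix S S ℝ} (h0 : ∀ i j, 0 ≤ M i j) (h1 : ∀ i, ∑ j, M i j = 1)
    (r : S → ℝ) (s : S) :
    (∑' t : ℕ, γ ^ t * ∑ s', (M ^ t) s s' * r s')
      = r s + γ * ∑ s', M s s' * (∑' t : ℕ, γ ^ t * ∑ s'', (M ^ t) s' s'' * r s'') := by
  rw [Summable.tsum_eq_zero_add (summable_row hγ0 hγ1 h0 h1 r s)]
  congr 1
  · simp [Matrix.one_apply]
  · calc ∑' t : ℕ, γ ^ (t+1) * ∑ s'', (M ^ (t+1)) s s'' * r s''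
        = ∑' t : ℕ, ∑ s', γ * (M s s' * (γ ^ t * ∑ s'', (M ^ t) s' s'' * r s'')) := by
          apply tsum_congr; intro t
          calc γ ^ (t+1) * ∑ s'', (M ^ (t+1)) s s'' * r s''
              = ∑ s'', ∑ s', γ ^ (t+1) * (M s s' * ((M ^ t) s' s'' * r s'')) := by
                rw [Finset.mul_sum]
                apply Finset.sum_congr rfl; intro s'' _
                rw [pow_succ' M, Matrix.mul_apply, Finset.sum_mul, Finset.mul_sum]
                apply Finset.sum_congr rfl; intro s' _; ring
            _ = ∑ s', ∑ s'', γ ^ (t+1) * (M s s' * ((M ^ t) s' s'' * r s'')) :=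
                Finset.sum_comm
            _ = ∑ s', γ * (M s s' * (γ ^ t * ∑ s'', (M ^ t) s' s'' * r s'')) := by
                apply Finset.sum_congr rfl; intro s' _
                simp only [Finset.mul_sum]
                apply Finset.sum_congr rfl; intro s'' _
                rw [pow_succ γ]
                ring
      _ = ∑ s', ∑' t : ℕ, γ * (M s s' * (γ ^ t * ∑ s'', (M ^ t) s' s'' * r s'')) := by
          exact Summable.tsum_finsetSum (fun s' _ =>
            ((summable_row hγ0 hγ1 h0 h1 r s').mul_left (M s s')).mul_left γ)
      _ = γ * ∑ s', M s s' * (∑' t : ℕ, γ ^ t * ∑ s'', (M ^ t) s' s'' * r s'') := by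
          rw [Finset.mul_sum]
          apply Finset.sum_congr rfl; intro s' _
          rw [tsum_mul_left, tsum_mul_left]

/-- Recursion for the discounted visitation distribution. -/
lemma d_rec {γ : ℝ} (hγ0 : 0 < γ) (hγ1 : γ < 1)
    {ρ : S → ℝ} (hρ0 : ∀ s, 0 ≤ ρ s) (hρ1 : ∑ s, ρ s = 1) {M : Matrix S S ℝ}
    (h0 : ∀ i j, 0 ≤ M i j) (h1 : ∀ i, ∑ j, M i j = 1) (s : S) :
    (1-γ) * ∑' t : ℕ, γ ^ t * ∑ s0, ρ s0 * (M ^ t) s0 s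
      = (1-γ) * ρ s
        + γ * ∑ k, ((1-γ) * ∑' t : ℕ, γ ^ t * ∑ s0, ρ s0 * (M ^ t) s0 k) * M k s := by
  have key : (∑' t : ℕ, γ ^ t * ∑ s0, ρ s0 * (M ^ t) s0 s)
      = ρ s + γ * ∑ k, (∑' t : ℕ, γ ^ t * ∑ s0, ρ s0 * (M ^ t) s0 k) * M k s := by
    rw [Summable.tsum_eq_zero_add (summable_D hγ0 hγ1 hρ0 hρ1 h0 h1 s)]
    congr 1
    · simp [Matrix.one_apply]
    · calc ∑' t : ℕ, γ ^ (t+1) * ∑ s0, ρ s0 * (M ^ (t+1)) s0 s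
          = ∑' t : ℕ, ∑ k, γ * ((γ ^ t * ∑ s0, ρ s0 * (M ^ t) s0 k) * M k s) := by
            apply tsum_congr; intro t
            rw [D_succ, Finset.mul_sum]
            apply Finset.sum_congr rfl; intro k _
            rw [pow_succ']
            ring
        _ = ∑ k, ∑' t : ℕ, γ * ((γ ^ t * ∑ s0, ρ s0 * (M ^ t) s0 k) * M k s) := by
            exact Summable.tsum_finsetSum (fun k _ =>
              (((summable_D hγ0 hγ1 hρ0 hρ1 h0 h1 k).mul_right (M k s)).mul_left γ))
        _ = γ * ∑ k, (∑' t : ℕ, γ ^ t * ∑ s0, ρ s0 * (M ^ t) s0 k) * M k s := by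
            rw [Finset.mul_sum]
            apply Finset.sum_congr rfl; intro k _
            rw [tsum_mul_left, tsum_mul_right]
  rw [key, mul_add]
  congr 1
  simp only [Finset.mul_sum]
  apply Finset.sum_congr rfl; intro k _
  ring

/-- Total mass of the visitation distribution is 1. -/
lemma d_mass {γ : ℝ} (hγ0 : 0 < γ) (hγ1 : γ < 1)
    {ρ : S → ℝ} (hρ0 : ∀ s, 0 ≤ ρ s) (hρ1 : ∑ s, ρ s = 1) {M : Matrix S S ℝ}
    (h0 : ∀ i j, 0 ≤ M i j) (h1 : ∀ i, ∑ j, M i j = 1) :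
    ∑ s, (1-γ) * ∑' t : ℕ, γ ^ t * ∑ s0, ρ s0 * (M ^ t) s0 s = 1 := by
  have := d_weight_eq hγ0 hγ1 hρ0 hρ1 h0 h1 (fun _ => 1)
  simp only [mul_one] at this
  rw [this]
  have : ∀ t : ℕ, γ ^ t * ∑ s : S, ∑ s0, ρ s0 * (M ^ t) s0 s = γ ^ t := by
    intro t; rw [D_sum hρ1 h1 t, mul_one]
  rw [tsum_congr this, tsum_geometric_of_lt_one hγ0.le hγ1]
  field_simp
  exact div_self (by linarith)

lemma d_nonneg' {γ : ℝ} (hγ0 : 0 < γ) (hγ1 : γ < 1)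
    {ρ : S → ℝ} (hρ0 : ∀ s, 0 ≤ ρ s) {M : Matrix S S ℝ}
    (h0 : ∀ i j, 0 ≤ M i j) (s : S) :
    0 ≤ (1-γ) * ∑' t : ℕ, γ ^ t * ∑ s0, ρ s0 * (M ^ t) s0 s := by
  apply mul_nonneg (by linarith)
  apply tsum_nonneg
  intro t
  exact mul_nonneg (pow_nonneg hγ0.le t) (D_nonneg hρ0 h0 t s)

end Stoch

set_option maxHeartbeats 2000000 in
/-- policy performance bound (Lemma 3.1, upper inequality). -/
theorem performance_upper_bound {S A : Type*} [Fintype S] [DecidableEq S] [Fintype A] [Nonempty S] [Nonempty A]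
    (P : S → A → S → ℝ) (hP0 : ∀ s a s', 0 ≤ P s a s') (hP1 : ∀ s a, ∑ s', P s a s' = 1)
    (γ : ℝ) (hγ0 : 0 < γ) (hγ1 : γ < 1)
    (ρ0 : S → ℝ) (hρ0 : ∀ s, 0 ≤ ρ0 s) (hρ1 : ∑ s, ρ0 s = 1)
    (pol : S → A → ℝ) (hpol0 : ∀ s a, 0 ≤ pol s a) (hpol1 : ∀ s, ∑ a, pol s a = 1) (pol' : S → A → ℝ) (hpol'0 : ∀ s a, 0 ≤ pol' s a) (hpol'1 : ∀ s, ∑ a, pol' s a = 1)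
    (habs : ∀ s a, pol s a = 0 → pol' s a = 0) (F : S → A → ℝ) :
    Jret P γ ρ0 F pol' - Jret P γ ρ0 F pol ≤
      (1 / (1 - γ)) * surrAdv P γ ρ0 F pol pol'
        + (Real.sqrt 2 * γ * epsAdv P γ F pol pol' / (1 - γ) ^ 2) *
          Real.sqrt (avgKL P γ ρ0 pol' pol) := by
  have h1γ : (0:ℝ) < 1 - γ := by linarith
  -- stochasticity of the induced matrices
  have hM0 : ∀ i j, 0 ≤ transMat P pol i j := fun i j =>
    Finset.sum_nonneg fun a _ => mul_nonneg (hpol0 i a) (hP0 i a j)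
  have hM'0 : ∀ i j, 0 ≤ transMat P pol' i j := fun i j =>
    Finset.sum_nonneg fun a _ => mul_nonneg (hpol'0 i a) (hP0 i a j)
  have hM1 : ∀ i, ∑ j, transMat P pol i j = 1 := by
    intro i
    unfold transMat
    rw [Finset.sum_comm]
    simp_rw [← Finset.mul_sum, hP1, mul_one]
    exact hpol1 i
  have hM'1 : ∀ i, ∑ j, transMat P pol' i j = 1 := by
    intro i
    unfold transMat
    rw [Finset.sum_comm]
    simp_rw [← Finset.mul_sum, hP1, mul_one]
    exact hpol'1 i
  -- the expected advantage under pol'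
  have hf : ∀ s, (∑ a, pol' s a * Adv P γ F pol s a)
      = (∑ a, pol' s a * F s a)
        + γ * (∑ s', transMat P pol' s s' * Vfun P γ F pol s') - Vfun P γ F pol s := by
    intro s
    unfold Adv Qfun
    have e1 : ∑ a, pol' s a * (F s a + γ * ∑ s', P s a s' * Vfun P γ F pol s'
          - Vfun P γ F pol s)
        = ∑ a, pol' s a * F s a
          + ∑ a, γ * ∑ s', pol' s a * (P s a s' * Vfun P γ F pol s')
          - ∑ a, pol' s a * Vfun P γ F pol s := by
      rw [← Finset.sum_add_distrib, ← Finset.sum_sub_distrib]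
      apply Finset.sum_congr rfl; intro a _
      rw [← Finset.mul_sum]
      ring
    rw [e1]
    congr 1
    · congr 1
      calc ∑ a, γ * ∑ s', pol' s a * (P s a s' * Vfun P γ F pol s')
          = ∑ a, ∑ s', γ * (pol' s a * (P s a s' * Vfun P γ F pol s')) := by
            apply Finset.sum_congr rfl; intro a _; rw [Finset.mul_sum]
        _ = ∑ s', ∑ a, γ * (pol' s a * (P s a s' * Vfun P γ F pol s')) := Finset.sum_comm
        _ = γ * ∑ s', transMat P pol' s s' * Vfun P γ F pol s' := by
            rw [Finset.mul_sum]
            apply Finset.sum_congr rfl; intro s' _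
            unfold transMat
            rw [Finset.sum_mul, Finset.mul_sum]
            apply Finset.sum_congr rfl; intro a _; ring
    · rw [← Finset.sum_mul, hpol'1, one_mul]
  -- performance difference identity
  have hPD : ∑ s, dVisit P γ ρ0 pol' s * (∑ a, pol' s a * Adv P γ F pol s a)
      = (1-γ) * (Jret P γ ρ0 F pol' - Jret P γ ρ0 F pol) := by
    have hstep1 : ∑ s, dVisit P γ ρ0 pol' s * (∑ a, pol' s a * Adv P γ F pol s a)
        = (1-γ) * ∑' t : ℕ, γ ^ t * ∑ s, (∑ s0, ρ0 s0 * (transMat P pol' ^ t) s0 s) *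
            (∑ a, pol' s a * Adv P γ F pol s a) :=
      d_weight_eq hγ0 hγ1 hρ0 hρ1 hM'0 hM'1 _
    have hkey : ∀ t : ℕ, γ ^ t * ∑ s, (∑ s0, ρ0 s0 * (transMat P pol' ^ t) s0 s) *
            (∑ a, pol' s a * Adv P γ F pol s a)
        = γ ^ t * (∑ s, (∑ s0, ρ0 s0 * (transMat P pol' ^ t) s0 s) * (∑ a, pol' s a * F s a))
          + γ ^ (t+1) * (∑ s, (∑ s0, ρ0 s0 * (transMat P pol' ^ (t+1)) s0 s) *
              Vfun P γ F pol s)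
          - γ ^ t * (∑ s, (∑ s0, ρ0 s0 * (transMat P pol' ^ t) s0 s) * Vfun P γ F pol s) := by
      intro t
      have e2 : ∑ s, (∑ s0, ρ0 s0 * (transMat P pol' ^ t) s0 s) *
            (∑ a, pol' s a * Adv P γ F pol s a)
          = ∑ s, (∑ s0, ρ0 s0 * (transMat P pol' ^ t) s0 s) * (∑ a, pol' s a * F s a)
            + γ * ∑ k, (∑ s0, ρ0 s0 * (transMat P pol' ^ t) s0 k) *
                (∑ s, transMat P pol' k s * Vfun P γ F pol s)
            - ∑ s, (∑ s0, ρ0 s0 * (transMat P pol' ^ t) s0 s) * Vfun P γ F pol s := by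
        rw [Finset.mul_sum, ← Finset.sum_add_distrib, ← Finset.sum_sub_distrib]
        apply Finset.sum_congr rfl; intro s _
        rw [hf s]
        ring
      rw [e2, ← D_MV]
      rw [pow_succ γ]
      ring
    calc ∑ s, dVisit P γ ρ0 pol' s * (∑ a, pol' s a * Adv P γ F pol s a)
        = (1-γ) * ∑' t : ℕ, (γ ^ t * (∑ s, (∑ s0, ρ0 s0 * (transMat P pol' ^ t) s0 s) *
              (∑ a, pol' s a * F s a))
            + γ ^ (t+1) * (∑ s, (∑ s0, ρ0 s0 * (transMat P pol' ^ (t+1)) s0 s) *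
                Vfun P γ F pol s)
            - γ ^ t * (∑ s, (∑ s0, ρ0 s0 * (transMat P pol' ^ t) s0 s) *
                Vfun P γ F pol s)) := by
          rw [hstep1]
          congr 1
          exact tsum_congr hkey
      _ = (1-γ) * ((∑' t : ℕ, γ ^ t * ∑ s, (∑ s0, ρ0 s0 * (transMat P pol' ^ t) s0 s) *
              (∑ a, pol' s a * F s a))
            + ((∑' t : ℕ, γ ^ t * ∑ s, (∑ s0, ρ0 s0 * (transMat P pol' ^ t) s0 s) *
                Vfun P γ F pol s)
              - (γ ^ 0 * ∑ s, (∑ s0, ρ0 s0 * (transMat P pol' ^ 0) s0 s) * Vfun P γ F pol s))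
            - (∑' t : ℕ, γ ^ t * ∑ s, (∑ s0, ρ0 s0 * (transMat P pol' ^ t) s0 s) *
                Vfun P γ F pol s)) := by
          congr 1
          have hsX := summable_Df hγ0 hγ1 hρ0 hρ1 hM'0 hM'1
            (fun s => ∑ a, pol' s a * F s a)
          have hsY := summable_Df hγ0 hγ1 hρ0 hρ1 hM'0 hM'1 (Vfun P γ F pol)
          have hsY' : Summable (fun t : ℕ => γ ^ (t+1) *
              ∑ s, (∑ s0, ρ0 s0 * (transMat P pol' ^ (t+1)) s0 s) * Vfun P γ F pol s) :=
            (summable_nat_add_iff 1).2 hsY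
          rw [Summable.tsum_sub (hsX.add hsY') hsY, Summable.tsum_add hsX hsY']
          congr 2
          exact tsum_shift hsY
      _ = (1-γ) * (Jret P γ ρ0 F pol' - Jret P γ ρ0 F pol) := by
          congr 1
          have hJ' : Jret P γ ρ0 F pol'
              = ∑' t : ℕ, γ ^ t * ∑ s, (∑ s0, ρ0 s0 * (transMat P pol' ^ t) s0 s) *
                  (∑ a, pol' s a * F s a) :=
            J_eq hγ0 hγ1 ρ0 hM'0 hM'1 _
          have hJ : γ ^ 0 * ∑ s, (∑ s0, ρ0 s0 * (transMat P pol' ^ 0) s0 s) *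
                Vfun P γ F pol s = Jret P γ ρ0 F pol := by
            simp [Matrix.one_apply, Jret]
          rw [← hJ', hJ]
          ring
  -- split against d_pol
  have hsplit : Jret P γ ρ0 F pol' - Jret P γ ρ0 F pol
      = (1/(1-γ)) * surrAdv P γ ρ0 F pol pol'
        + (1/(1-γ)) * ∑ s, (dVisit P γ ρ0 pol' s - dVisit P γ ρ0 pol s) *
            (∑ a, pol' s a * Adv P γ F pol s a) := by
    have e3 : ∑ s, (dVisit P γ ρ0 pol' s - dVisit P γ ρ0 pol s) *
          (∑ a, pol' s a * Adv P γ F pol s a)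
        = (∑ s, dVisit P γ ρ0 pol' s * (∑ a, pol' s a * Adv P γ F pol s a))
          - surrAdv P γ ρ0 F pol pol' := by
      unfold surrAdv
      rw [← Finset.sum_sub_distrib]
      apply Finset.sum_congr rfl; intro s _; ring
    rw [e3, hPD]
    field_simp
    ring
  -- epsilon bound on the shifted advantage
  have hεf : ∀ s, |∑ a, pol' s a * Adv P γ F pol s a| ≤ epsAdv P γ F pol pol' := by
    intro s
    exact Finset.le_sup' (fun s => |∑ a, pol' s a * Adv P γ F pol s a|) (Finset.mem_univ s)
  obtain ⟨s₀⟩ := (inferInstance : Nonempty S)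
  have hε0 : 0 ≤ epsAdv P γ F pol pol' := le_trans (abs_nonneg _) (hεf s₀)
  have hΔ : ∑ s, (dVisit P γ ρ0 pol' s - dVisit P γ ρ0 pol s) *
        (∑ a, pol' s a * Adv P γ F pol s a)
      ≤ epsAdv P γ F pol pol' * ∑ s, |dVisit P γ ρ0 pol' s - dVisit P γ ρ0 pol s| := by
    calc ∑ s, (dVisit P γ ρ0 pol' s - dVisit P γ ρ0 pol s) *
          (∑ a, pol' s a * Adv P γ F pol s a)
        ≤ ∑ s, |(dVisit P γ ρ0 pol' s - dVisit P γ ρ0 pol s) *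
            (∑ a, pol' s a * Adv P γ F pol s a)| :=
          Finset.sum_le_sum fun s _ => le_abs_self _
      _ = ∑ s, |dVisit P γ ρ0 pol' s - dVisit P γ ρ0 pol s| *
            |∑ a, pol' s a * Adv P γ F pol s a| := by
          apply Finset.sum_congr rfl; intro s _; rw [abs_mul]
      _ ≤ ∑ s, |dVisit P γ ρ0 pol' s - dVisit P γ ρ0 pol s| * epsAdv P γ F pol pol' :=
          Finset.sum_le_sum fun s _ => mul_le_mul_of_nonneg_left (hεf s) (abs_nonneg _)
      _ = epsAdv P γ F pol pol' * ∑ s, |dVisit P γ ρ0 pol' s - dVisit P γ ρ0 pol s| := by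
          rw [Finset.mul_sum]
          apply Finset.sum_congr rfl; intro s _; ring
  -- recursions for the visitation distributions
  have hrec' : ∀ s, dVisit P γ ρ0 pol' s
      = (1-γ) * ρ0 s + γ * ∑ k, dVisit P γ ρ0 pol' k * transMat P pol' k s :=
    fun s => d_rec hγ0 hγ1 hρ0 hρ1 hM'0 hM'1 s
  have hrec : ∀ s, dVisit P γ ρ0 pol s
      = (1-γ) * ρ0 s + γ * ∑ k, dVisit P γ ρ0 pol k * transMat P pol k s :=
    fun s => d_rec hγ0 hγ1 hρ0 hρ1 hM0 hM1 s
  have hdnn : ∀ s, 0 ≤ dVisit P γ ρ0 pol s := fun s => d_nonneg' hγ0 hγ1 hρ0 hM0 s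
  -- row-wise total variation bound on transition matrices
  have hrowΔ : ∀ k, ∑ s, |transMat P pol' k s - transMat P pol k s|
      ≤ ∑ a, |pol' k a - pol k a| := by
    intro k
    have hterm : ∀ s, |transMat P pol' k s - transMat P pol k s|
        ≤ ∑ a, |pol' k a - pol k a| * P k a s := by
      intro s
      have e5 : transMat P pol' k s - transMat P pol k s
          = ∑ a, (pol' k a - pol k a) * P k a s := by
        unfold transMat
        rw [← Finset.sum_sub_distrib]
        apply Finset.sum_congr rfl; intro a _; ring
      rw [e5]
      calc |∑ a, (pol' k a - pol k a) * P k a s|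
          ≤ ∑ a, |(pol' k a - pol k a) * P k a s| := Finset.abs_sum_le_sum_abs _ _
        _ = ∑ a, |pol' k a - pol k a| * P k a s := by
            apply Finset.sum_congr rfl; intro a _
            rw [abs_mul, abs_of_nonneg (hP0 k a s)]
    calc ∑ s, |transMat P pol' k s - transMat P pol k s|
        ≤ ∑ s, ∑ a, |pol' k a - pol k a| * P k a s := Finset.sum_le_sum fun s _ => hterm s
      _ = ∑ a, |pol' k a - pol k a| := by
          rw [Finset.sum_comm]
          simp_rw [← Finset.mul_sum, hP1, mul_one]
  -- ℓ¹ bound on the visitation shift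
  have hl1 : ∑ s, |dVisit P γ ρ0 pol' s - dVisit P γ ρ0 pol s|
      ≤ γ/(1-γ) * ∑ s, dVisit P γ ρ0 pol s * (∑ a, |pol' s a - pol s a|) := by
    have hdiff : ∀ s, dVisit P γ ρ0 pol' s - dVisit P γ ρ0 pol s
        = γ * (∑ k, (dVisit P γ ρ0 pol' k - dVisit P γ ρ0 pol k) * transMat P pol' k s
          + ∑ k, dVisit P γ ρ0 pol k * (transMat P pol' k s - transMat P pol k s)) := by
      intro s
      have e4 : ∑ k, (dVisit P γ ρ0 pol' k - dVisit P γ ρ0 pol k) * transMat P pol' k s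
          + ∑ k, dVisit P γ ρ0 pol k * (transMat P pol' k s - transMat P pol k s)
          = ∑ k, dVisit P γ ρ0 pol' k * transMat P pol' k s
            - ∑ k, dVisit P γ ρ0 pol k * transMat P pol k s := by
        rw [← Finset.sum_add_distrib, ← Finset.sum_sub_distrib]
        apply Finset.sum_congr rfl; intro k _; ring
      rw [e4, hrec' s, hrec s]
      ring
    have hstep : ∑ s, |dVisit P γ ρ0 pol' s - dVisit P γ ρ0 pol s|
        ≤ γ * ((∑ k, |dVisit P γ ρ0 pol' k - dVisit P γ ρ0 pol k|)
          + ∑ k, dVisit P γ ρ0 pol k * (∑ a, |pol' k a - pol k a|)) := by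
      calc ∑ s, |dVisit P γ ρ0 pol' s - dVisit P γ ρ0 pol s|
          ≤ ∑ s, γ * ((∑ k, |dVisit P γ ρ0 pol' k - dVisit P γ ρ0 pol k| *
                transMat P pol' k s)
              + ∑ k, dVisit P γ ρ0 pol k *
                  |transMat P pol' k s - transMat P pol k s|) := by
            apply Finset.sum_le_sum; intro s _
            rw [hdiff s, abs_mul, abs_of_nonneg hγ0.le]
            apply mul_le_mul_of_nonneg_left _ hγ0.le
            apply le_trans (abs_add_le _ _)
            apply add_le_add
            · apply le_trans (Finset.abs_sum_le_sum_abs _ _)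
              apply Finset.sum_le_sum; intro k _
              rw [abs_mul, abs_of_nonneg (hM'0 k s)]
            · apply le_trans (Finset.abs_sum_le_sum_abs _ _)
              apply Finset.sum_le_sum; intro k _
              rw [abs_mul, abs_of_nonneg (hdnn k)]
        _ = γ * ((∑ k, |dVisit P γ ρ0 pol' k - dVisit P γ ρ0 pol k| *
              ∑ s, transMat P pol' k s)
            + ∑ k, dVisit P γ ρ0 pol k *
                ∑ s, |transMat P pol' k s - transMat P pol k s|) := by
            rw [← Finset.mul_sum, Finset.sum_add_distrib]
            congr 2
            · rw [Finset.sum_comm]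
              apply Finset.sum_congr rfl; intro k _
              rw [Finset.mul_sum]
            · rw [Finset.sum_comm]
              apply Finset.sum_congr rfl; intro k _
              rw [Finset.mul_sum]
        _ ≤ γ * ((∑ k, |dVisit P γ ρ0 pol' k - dVisit P γ ρ0 pol k|)
            + ∑ k, dVisit P γ ρ0 pol k * (∑ a, |pol' k a - pol k a|)) := by
            apply mul_le_mul_of_nonneg_left _ hγ0.le
            apply add_le_add
            · apply Finset.sum_le_sum; intro k _
              rw [hM'1 k, mul_one]
            · apply Finset.sum_le_sum; intro k _
              exact mul_le_mul_of_nonneg_left (hrowΔ k) (hdnn k)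
    rw [div_mul_eq_mul_div, le_div_iff₀ h1γ]
    nlinarith [hstep]
  -- Pinsker per state
  have hpin : ∀ s, (∑ a, |pol' s a - pol s a|) ≤ Real.sqrt (2 * klState pol' pol s)
      ∧ 0 ≤ klState pol' pol s := by
    intro s
    have h := pinsker (fun a => pol' s a) (fun a => pol s a) (fun a => hpol'0 s a)
      (fun a => hpol0 s a) (hpol'1 s) (hpol1 s) (fun a => habs s a)
    exact ⟨h.2, h.1⟩
  -- Cauchy–Schwarz aggregation
  have havgKL0 : 0 ≤ avgKL P γ ρ0 pol' pol :=
    Finset.sum_nonneg fun s _ => mul_nonneg (hdnn s) (hpin s).2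
  have hCS2 : ∑ s, dVisit P γ ρ0 pol s * Real.sqrt (2 * klState pol' pol s)
      ≤ Real.sqrt 2 * Real.sqrt (avgKL P γ ρ0 pol' pol) := by
    have h := Finset.sum_sq_le_sum_mul_sum_of_sq_eq_mul Finset.univ
      (r := fun s => dVisit P γ ρ0 pol s * Real.sqrt (2 * klState pol' pol s))
      (f := fun s => dVisit P γ ρ0 pol s)
      (g := fun s => dVisit P γ ρ0 pol s * (2 * klState pol' pol s))
      (fun s _ => hdnn s)
      (fun s _ => mul_nonneg (hdnn s) (by nlinarith [(hpin s).2]))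
      (fun s _ => by
        rw [mul_pow, Real.sq_sqrt (by nlinarith [(hpin s).2] : 0 ≤ 2 * klState pol' pol s)]
        ring)
    have hsum1 : ∑ s, dVisit P γ ρ0 pol s = 1 := d_mass hγ0 hγ1 hρ0 hρ1 hM0 hM1
    have hsum2 : ∑ s, dVisit P γ ρ0 pol s * (2 * klState pol' pol s)
        = 2 * avgKL P γ ρ0 pol' pol := by
      unfold avgKL
      rw [Finset.mul_sum]
      apply Finset.sum_congr rfl; intro s _; ring
    rw [hsum1, hsum2, one_mul] at h
    have hr0 : 0 ≤ ∑ s, dVisit P γ ρ0 pol s * Real.sqrt (2 * klState pol' pol s) :=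
      Finset.sum_nonneg fun s _ => mul_nonneg (hdnn s) (Real.sqrt_nonneg _)
    calc ∑ s, dVisit P γ ρ0 pol s * Real.sqrt (2 * klState pol' pol s)
        = Real.sqrt ((∑ s, dVisit P γ ρ0 pol s * Real.sqrt (2 * klState pol' pol s))^2) :=
          (Real.sqrt_sq hr0).symm
      _ ≤ Real.sqrt (2 * avgKL P γ ρ0 pol' pol) := Real.sqrt_le_sqrt h
      _ = Real.sqrt 2 * Real.sqrt (avgKL P γ ρ0 pol' pol) := Real.sqrt_mul (by norm_num) _
  have hdg : ∑ s, dVisit P γ ρ0 pol s * (∑ a, |pol' s a - pol s a|)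
      ≤ Real.sqrt 2 * Real.sqrt (avgKL P γ ρ0 pol' pol) :=
    le_trans (Finset.sum_le_sum fun s _ =>
      mul_le_mul_of_nonneg_left (hpin s).1 (hdnn s)) hCS2
  -- final assembly
  rw [hsplit]
  apply add_le_add_right
  calc (1/(1-γ)) * ∑ s, (dVisit P γ ρ0 pol' s - dVisit P γ ρ0 pol s) *
        (∑ a, pol' s a * Adv P γ F pol s a)
      ≤ (1/(1-γ)) * (epsAdv P γ F pol pol' *
          ∑ s, |dVisit P γ ρ0 pol' s - dVisit P γ ρ0 pol s|) :=
        mul_le_mul_of_nonneg_left hΔ (one_div_nonneg.2 h1γ.le)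
    _ ≤ (1/(1-γ)) * (epsAdv P γ F pol pol' *
          (γ/(1-γ) * ∑ s, dVisit P γ ρ0 pol s * (∑ a, |pol' s a - pol s a|))) := by
        apply mul_le_mul_of_nonneg_left _ (one_div_nonneg.2 h1γ.le)
        exact mul_le_mul_of_nonneg_left hl1 hε0
    _ ≤ (1/(1-γ)) * (epsAdv P γ F pol pol' *
          (γ/(1-γ) * (Real.sqrt 2 * Real.sqrt (avgKL P γ ρ0 pol' pol)))) := by
        apply mul_le_mul_of_nonneg_left _ (one_div_nonneg.2 h1γ.le)
        apply mul_le_mul_of_nonneg_left _ hε0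
        exact mul_le_mul_of_nonneg_left hdg (div_nonneg hγ0.le h1γ.le)
    _ = (Real.sqrt 2 * γ * epsAdv P γ F pol pol' / (1 - γ) ^ 2) *
          Real.sqrt (avgKL P γ ρ0 pol' pol) := by
        field_simp
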